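/- Let Q be the quotient of the polynomial ring ℤ[x_A, x_{A'}, x_b, x_c, x_{c'}, x_d] in six variables by the ideal generated by x_A·x_{A'} − 1, x_b² − 1, x_d·x_{c'} − x_b·x_{c'}², and x_d² − x_c·x_{c'}. Then the images in Q of the monomials x_A^s·x_{A'}^t·x_b^ε·x_d^δ·x_c^m·x_{c'}^r with s, t, m ∈ ℕ, ε, δ ∈ {0, 1}, r ≤ 2, δ·r = 0 and s·t = 0 form a ℤ-module basis of Q; in particular every element of Q is a ℤ-linear combination of such monomials in a unique way. (This is the precise form, for the subring generated by A, A⁻¹, b, c, c', d, of the paper's assertion that the rewriting rules (4) satisfy the hypotheses of the diamond lemma and hence give a unique normal form for the invariant F.) -/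

import Mathlib

open MvPolynomial

/-- Indices of the six variables `x_A, x_{A'}, x_b, x_c, x_{c'}, x_d`. -/
inductive Var : Type
  | A : Var
  | A' : Var
  | b : Var
  | c : Var
  | c' : Var
  | d : Var
  deriving DecidableEq

open Var in
/-- The ideal of `ℤ[x_A, x_{A'}, x_b, x_c, x_{c'}, x_d]` generated by
`x_A x_{A'} - 1`, `x_b² - 1`, `x_d x_{c'} - x_b x_{c'}²`, `x_d² - x_c x_{c'}`. -/
noncomputable def relIdeal : Ideal (MvPolynomial Var ℤ) :=
  Ideal.span {X A * X A' - 1, X b ^ 2 - 1,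
    X d * X c' - X b * X c' ^ 2, X d ^ 2 - X c * X c'}

/-- Exponent data of a normal-form monomial: `x_A^s x_{A'}^t x_b^ε x_d^δ x_c^m x_{c'}^r`
with `ε, δ ∈ {0,1}`, `r ≤ 2`, `δr = 0` and `st = 0`. -/
structure NFIndex : Type where
  s : ℕ
  t : ℕ
  ε : ℕ
  δ : ℕ
  m : ℕ
  r : ℕ
  hε : ε ≤ 1
  hδ : δ ≤ 1
  hr : r ≤ 2
  hδr : δ * r = 0
  hst : s * t = 0

open Var in
/-- The image in the quotient ring of the normal-form monomial indexed by `i`. -/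
noncomputable def nfMono (i : NFIndex) : MvPolynomial Var ℤ ⧸ relIdeal :=
  Ideal.Quotient.mk relIdeal
    (X A ^ i.s * X A' ^ i.t * X b ^ i.ε * X d ^ i.δ * X c ^ i.m * X c' ^ i.r)

/-! ### Auxiliary development -/

theorem NFIndex.ext' {a b : NFIndex} (h1 : a.s = b.s) (h2 : a.t = b.t) (h3 : a.ε = b.ε)
    (h4 : a.δ = b.δ) (h5 : a.m = b.m) (h6 : a.r = b.r) : a = b := by
  cases a; cases b; simp_all

/-- Closed-form normal form of a monomial with given exponents. -/
def nfFun (sA sA' sb sc sc' sd : ℕ) : NFIndex where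
  s := sA - sA'
  t := sA' - sA
  ε := (if sd % 2 = 1 ∧ 1 ≤ sc' + sd / 2 then sb + 1 else sb) % 2
  δ := if sd % 2 = 1 ∧ 1 ≤ sc' + sd / 2 then 0 else sd % 2
  m := sc + sd / 2 +
    ((if sd % 2 = 1 ∧ 1 ≤ sc' + sd / 2 then sc' + sd / 2 + 1 else sc' + sd / 2) - 2)
  r := min (if sd % 2 = 1 ∧ 1 ≤ sc' + sd / 2 then sc' + sd / 2 + 1 else sc' + sd / 2) 2
  hε := by split <;> omega
  hδ := by split <;> omega
  hr := by split <;> omega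
  hδr := by
    split_ifs with h
    · simp
    · rcases Nat.mod_two_eq_zero_or_one sd with h' | h'
      · simp [h']
      · have h2 : sc' + sd / 2 = 0 := by omega
        simp [h2, h']
  hst := by rcases le_total sA sA' with h|h <;> simp [Nat.sub_eq_zero_of_le h]

theorem nfFun_rel1 (sA sA' sb sc sc' sd : ℕ) :
    nfFun (sA+1) (sA'+1) sb sc sc' sd = nfFun sA sA' sb sc sc' sd := by
  apply NFIndex.ext' <;> simp only [nfFun] <;> omega

theorem nfFun_rel2 (sA sA' sb sc sc' sd : ℕ) :
    nfFun sA sA' (sb+2) sc sc' sd = nfFun sA sA' sb sc sc' sd := by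
  apply NFIndex.ext' <;> simp only [nfFun] <;> (try split_ifs) <;> omega

theorem nfFun_rel3 (sA sA' sb sc sc' sd : ℕ) :
    nfFun sA sA' sb sc (sc'+1) (sd+1) = nfFun sA sA' (sb+1) sc (sc'+2) sd := by
  apply NFIndex.ext' <;> simp only [nfFun] <;> (try split_ifs) <;> omega

theorem nfFun_rel4 (sA sA' sb sc sc' sd : ℕ) :
    nfFun sA sA' sb sc sc' (sd+2) = nfFun sA sA' sb (sc+1) (sc'+1) sd := by
  apply NFIndex.ext' <;> simp only [nfFun] <;> (try split_ifs) <;> omega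

theorem nfFun_idem (i : NFIndex) : nfFun i.s i.t i.ε i.m i.r i.δ = i := by
  have h1 : i.s = 0 ∨ i.t = 0 := Nat.mul_eq_zero.mp i.hst
  have h2 : i.δ = 0 ∨ i.r = 0 := Nat.mul_eq_zero.mp i.hδr
  have h3 := i.hε; have h4 := i.hδ; have h5 := i.hr
  apply NFIndex.ext' <;> simp only [nfFun] <;> (try split_ifs) <;> omega

open Var in
/-- Normal form of an exponent vector. -/
def nfExp (e : Var →₀ ℕ) : NFIndex := nfFun (e A) (e A') (e b) (e c) (e c') (e d)

open Var in
/-- Exponent vector of the normal-form monomial indexed by `i`. -/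
noncomputable def expOf (i : NFIndex) : Var →₀ ℕ :=
  Finsupp.single A i.s + Finsupp.single A' i.t + Finsupp.single b i.ε +
    Finsupp.single d i.δ + Finsupp.single c i.m + Finsupp.single c' i.r

open Var in
theorem nfExp_expOf (i : NFIndex) : nfExp (expOf i) = i := by
  have h : nfExp (expOf i) = nfFun i.s i.t i.ε i.m i.r i.δ := by
    simp [nfExp, expOf, Finsupp.add_apply, Finsupp.single_apply]
  rw [h, nfFun_idem]

open Var in
theorem monomial_expOf (i : NFIndex) :
    (monomial (expOf i) 1 : MvPolynomial Var ℤ) =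
      X A ^ i.s * X A' ^ i.t * X b ^ i.ε * X d ^ i.δ * X c ^ i.m * X c' ^ i.r := by
  simp [expOf, X_pow_eq_monomial, monomial_mul]

/-- The reading map sending each monomial to its normal form. -/
noncomputable def φ : MvPolynomial Var ℤ →ₗ[ℤ] (NFIndex →₀ ℤ) :=
  (MvPolynomial.basisMonomials Var ℤ).constr ℤ fun e => Finsupp.single (nfExp e) 1

theorem φ_monomial (e : Var →₀ ℕ) (z : ℤ) : φ (monomial e z) = Finsupp.single (nfExp e) z := by
  have h : (monomial e z : MvPolynomial Var ℤ) = z • (MvPolynomial.basisMonomials Var ℤ) e := by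
    rw [MvPolynomial.coe_basisMonomials]
    simp [MvPolynomial.smul_monomial]
  rw [h, map_smul, φ, Module.Basis.constr_basis]
  simp [Finsupp.smul_single]

theorem φ_mul_sub (e₁ e₂ : Var →₀ ℕ) (h : ∀ e, nfExp (e + e₁) = nfExp (e + e₂))
    (p : MvPolynomial Var ℤ) :
    φ (p * (monomial e₁ 1 - monomial e₂ 1)) = 0 := by
  induction p using MvPolynomial.induction_on' with
  | monomial u a =>
    rw [mul_sub, monomial_mul, monomial_mul, map_sub, φ_monomial, φ_monomial,
      mul_one, h u, sub_self]
  | add p q hp hq => rw [add_mul, map_add, hp, hq, add_zero]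

open Var in
theorem φ_relIdeal {x : MvPolynomial Var ℤ} (hx : x ∈ relIdeal) : φ x = 0 := by
  have hX : ∀ n : Var, (X n : MvPolynomial Var ℤ) = monomial (Finsupp.single n 1) 1 := fun n => rfl
  have hone : (1 : MvPolynomial Var ℤ) = monomial 0 1 := rfl
  have key : ∀ x ∈ relIdeal, ∀ p : MvPolynomial Var ℤ, φ (p * x) = 0 := by
    intro x hx
    refine Submodule.span_induction ?_ ?_ ?_ ?_ hx
    · intro g hg p
      simp only [Set.mem_insert_iff, Set.mem_singleton_iff] at hg
      rcases hg with rfl | rfl | rfl | rfl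
      · rw [show (X A * X A' - 1 : MvPolynomial Var ℤ) =
            monomial (Finsupp.single A 1 + Finsupp.single A' 1) 1 - monomial 0 1 by
          simp [hX, monomial_mul, monomial_zero', C_1]]
        refine φ_mul_sub _ _ (fun e => ?_) p
        simp only [nfExp, Finsupp.add_apply, Finsupp.single_apply, Finsupp.coe_zero,
          Pi.zero_apply]
        simp only [reduceIte, reduceCtorEq, if_false, if_true]
        simpa using nfFun_rel1 (e A) (e A') (e b) (e c) (e c') (e d)
      · rw [show (X b ^ 2 - 1 : MvPolynomial Var ℤ) =
            monomial (Finsupp.single b 2) 1 - monomial 0 1 by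
          simp [X_pow_eq_monomial, monomial_zero', C_1]]
        refine φ_mul_sub _ _ (fun e => ?_) p
        simp only [nfExp, Finsupp.add_apply, Finsupp.single_apply, Finsupp.coe_zero,
          Pi.zero_apply]
        simp only [reduceIte, reduceCtorEq, if_false, if_true]
        simpa using nfFun_rel2 (e A) (e A') (e b) (e c) (e c') (e d)
      · rw [show (X d * X c' - X b * X c' ^ 2 : MvPolynomial Var ℤ) =
            monomial (Finsupp.single d 1 + Finsupp.single c' 1) 1 -
              monomial (Finsupp.single b 1 + Finsupp.single c' 2) 1 by
          simp [hX, monomial_mul, monomial_pow, Finsupp.smul_single]]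
        refine φ_mul_sub _ _ (fun e => ?_) p
        simp only [nfExp, Finsupp.add_apply, Finsupp.single_apply]
        simp only [reduceIte, reduceCtorEq, if_false, if_true]
        simpa using nfFun_rel3 (e A) (e A') (e b) (e c) (e c') (e d)
      · rw [show (X d ^ 2 - X c * X c' : MvPolynomial Var ℤ) =
            monomial (Finsupp.single d 2) 1 -
              monomial (Finsupp.single c 1 + Finsupp.single c' 1) 1 by
          simp [hX, monomial_mul, monomial_pow, Finsupp.smul_single]]
        refine φ_mul_sub _ _ (fun e => ?_) p
        simp only [nfExp, Finsupp.add_apply, Finsupp.single_apply]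
        simp only [reduceIte, reduceCtorEq, if_false, if_true]
        simpa using nfFun_rel4 (e A) (e A') (e b) (e c) (e c') (e d)
    · intro p; rw [mul_zero, map_zero]
    · intro x y _ _ hx hy p; rw [mul_add, map_add, hx, hy, add_zero]
    · intro a x _ hx p
      rw [smul_eq_mul, ← mul_assoc]; exact hx (p * a)
  have := key x hx 1
  rwa [one_mul] at this

section Qside
open Var

noncomputable abbrev mkq : MvPolynomial Var ℤ →+* MvPolynomial Var ℤ ⧸ relIdeal :=
  Ideal.Quotient.mk relIdeal

theorem hA : mkq (X A) * mkq (X A') = 1 := by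
  rw [← map_mul, ← map_one mkq, Ideal.Quotient.eq]
  exact Ideal.subset_span (Set.mem_insert _ _)

theorem hb : mkq (X b) ^ 2 = 1 := by
  rw [← map_pow, ← map_one mkq, Ideal.Quotient.eq]
  exact Ideal.subset_span (Set.mem_insert_of_mem _ (Set.mem_insert _ _))

theorem hdc : mkq (X d) * mkq (X c') = mkq (X b) * mkq (X c') ^ 2 := by
  rw [← map_pow, ← map_mul, ← map_mul, Ideal.Quotient.eq]
  exact Ideal.subset_span
    (Set.mem_insert_of_mem _ (Set.mem_insert_of_mem _ (Set.mem_insert _ _)))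

theorem hdd : mkq (X d) ^ 2 = mkq (X c) * mkq (X c') := by
  rw [← map_pow, ← map_mul, Ideal.Quotient.eq]
  exact Ideal.subset_span
    (Set.mem_insert_of_mem _ (Set.mem_insert_of_mem _ (Set.mem_insert_of_mem _ rfl)))

theorem hc3 : mkq (X c') ^ 3 = mkq (X c) * mkq (X c') ^ 2 := by
  linear_combination (mkq (X c')) * hdd - (mkq (X b) * mkq (X c') + mkq (X d)) * hdc
    - (mkq (X c')) ^ 3 * hb

/-- Unbundled normal-form monomial in the quotient ring. -/
noncomputable def NF (s t ε δ m r : ℕ) : MvPolynomial Var ℤ ⧸ relIdeal :=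
  mkq (X A) ^ s * mkq (X A') ^ t * mkq (X b) ^ ε * mkq (X d) ^ δ * mkq (X c) ^ m *
    mkq (X c') ^ r

theorem nfMono_eq_NF (i : NFIndex) : nfMono i = NF i.s i.t i.ε i.δ i.m i.r := by
  simp [nfMono, NF, map_mul, map_pow]

theorem NF_mem (s t ε δ m r : ℕ) (hε : ε ≤ 1) (hδ : δ ≤ 1) (hr : r ≤ 2) (hδr : δ * r = 0)
    (hst : s * t = 0) : NF s t ε δ m r ∈ Submodule.span ℤ (Set.range nfMono) :=
  Submodule.subset_span ⟨⟨s, t, ε, δ, m, r, hε, hδ, hr, hδr, hst⟩, (nfMono_eq_NF _)⟩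

set_option maxHeartbeats 1000000 in
theorem NF_mul_X_mem (v : Var) (s t ε δ m r : ℕ) (hε : ε ≤ 1) (hδ : δ ≤ 1) (hr : r ≤ 2)
    (hδr : δ * r = 0) (hst : s * t = 0) :
    NF s t ε δ m r * mkq (X v) ∈ Submodule.span ℤ (Set.range nfMono) := by
  cases v with
  | A =>
    cases t with
    | zero =>
      rw [show NF s 0 ε δ m r * mkq (X A) = NF (s+1) 0 ε δ m r by simp only [NF]; ring]
      exact NF_mem _ _ _ _ _ _ hε hδ hr hδr (by omega)
    | succ t' =>
      have hs : s = 0 := by rcases Nat.mul_eq_zero.mp hst with h | h <;> omega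
      subst hs
      rw [show NF 0 (t'+1) ε δ m r * mkq (X A) = NF 0 t' ε δ m r by
        simp only [NF]
        linear_combination (mkq (X A') ^ t' * mkq (X b) ^ ε * mkq (X d) ^ δ * mkq (X c) ^ m *
          mkq (X c') ^ r) * hA]
      exact NF_mem _ _ _ _ _ _ hε hδ hr hδr (by omega)
  | A' =>
    cases s with
    | zero =>
      rw [show NF 0 t ε δ m r * mkq (X A') = NF 0 (t+1) ε δ m r by simp only [NF]; ring]
      exact NF_mem _ _ _ _ _ _ hε hδ hr hδr (by omega)
    | succ s' =>
      have ht : t = 0 := by rcases Nat.mul_eq_zero.mp hst with h | h <;> omega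
      subst ht
      rw [show NF (s'+1) 0 ε δ m r * mkq (X A') = NF s' 0 ε δ m r by
        simp only [NF]
        linear_combination (mkq (X A) ^ s' * mkq (X b) ^ ε * mkq (X d) ^ δ * mkq (X c) ^ m *
          mkq (X c') ^ r) * hA]
      exact NF_mem _ _ _ _ _ _ hε hδ hr hδr (by omega)
  | b =>
    interval_cases ε
    · rw [show NF s t 0 δ m r * mkq (X b) = NF s t 1 δ m r by simp only [NF]; ring]
      exact NF_mem _ _ _ _ _ _ (by omega) hδ hr hδr hst
    · rw [show NF s t 1 δ m r * mkq (X b) = NF s t 0 δ m r by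
        simp only [NF]
        linear_combination (mkq (X A) ^ s * mkq (X A') ^ t * mkq (X d) ^ δ * mkq (X c) ^ m *
          mkq (X c') ^ r) * hb]
      exact NF_mem _ _ _ _ _ _ (by omega) hδ hr hδr hst
  | c =>
    rw [show NF s t ε δ m r * mkq (X c) = NF s t ε δ (m+1) r by simp only [NF]; ring]
    exact NF_mem _ _ _ _ _ _ hε hδ hr hδr hst
  | c' =>
    interval_cases δ
    · interval_cases r
      · rw [show NF s t ε 0 m 0 * mkq (X c') = NF s t ε 0 m 1 by simp only [NF]; ring]
        exact NF_mem _ _ _ _ _ _ hε (by omega) (by omega) (by omega) hst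
      · rw [show NF s t ε 0 m 1 * mkq (X c') = NF s t ε 0 m 2 by simp only [NF]; ring]
        exact NF_mem _ _ _ _ _ _ hε (by omega) (by omega) (by omega) hst
      · rw [show NF s t ε 0 m 2 * mkq (X c') = NF s t ε 0 (m+1) 2 by
          simp only [NF]
          linear_combination (mkq (X A) ^ s * mkq (X A') ^ t * mkq (X b) ^ ε *
            mkq (X c) ^ m) * hc3]
        exact NF_mem _ _ _ _ _ _ hε (by omega) (by omega) (by omega) hst
    · have hr0 : r = 0 := by omega
      subst hr0
      interval_cases ε
      · rw [show NF s t 0 1 m 0 * mkq (X c') = NF s t 1 0 m 2 by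
          simp only [NF]
          linear_combination (mkq (X A) ^ s * mkq (X A') ^ t * mkq (X c) ^ m) * hdc]
        exact NF_mem _ _ _ _ _ _ (by omega) (by omega) (by omega) (by omega) hst
      · rw [show NF s t 1 1 m 0 * mkq (X c') = NF s t 0 0 m 2 by
          simp only [NF]
          linear_combination (mkq (X A) ^ s * mkq (X A') ^ t * mkq (X c) ^ m * mkq (X b)) * hdc
            + (mkq (X A) ^ s * mkq (X A') ^ t * mkq (X c) ^ m * mkq (X c') ^ 2) * hb]
        exact NF_mem _ _ _ _ _ _ (by omega) (by omega) (by omega) (by omega) hst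
  | d =>
    interval_cases δ
    · interval_cases r
      · rw [show NF s t ε 0 m 0 * mkq (X d) = NF s t ε 1 m 0 by simp only [NF]; ring]
        exact NF_mem _ _ _ _ _ _ hε (by omega) (by omega) (by omega) hst
      · interval_cases ε
        · rw [show NF s t 0 0 m 1 * mkq (X d) = NF s t 1 0 m 2 by
            simp only [NF]
            linear_combination (mkq (X A) ^ s * mkq (X A') ^ t * mkq (X c) ^ m) * hdc]
          exact NF_mem _ _ _ _ _ _ (by omega) (by omega) (by omega) (by omega) hst
        · rw [show NF s t 1 0 m 1 * mkq (X d) = NF s t 0 0 m 2 by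
            simp only [NF]
            linear_combination (mkq (X A) ^ s * mkq (X A') ^ t * mkq (X c) ^ m * mkq (X b)) * hdc
              + (mkq (X A) ^ s * mkq (X A') ^ t * mkq (X c) ^ m * mkq (X c') ^ 2) * hb]
          exact NF_mem _ _ _ _ _ _ (by omega) (by omega) (by omega) (by omega) hst
      · interval_cases ε
        · rw [show NF s t 0 0 m 2 * mkq (X d) = NF s t 1 0 (m+1) 2 by
            simp only [NF]
            linear_combination (mkq (X A) ^ s * mkq (X A') ^ t * mkq (X c) ^ m * mkq (X c')) * hdc
              + (mkq (X A) ^ s * mkq (X A') ^ t * mkq (X c) ^ m * mkq (X b)) * hc3]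
          exact NF_mem _ _ _ _ _ _ (by omega) (by omega) (by omega) (by omega) hst
        · rw [show NF s t 1 0 m 2 * mkq (X d) = NF s t 0 0 (m+1) 2 by
            simp only [NF]
            linear_combination
              (mkq (X A) ^ s * mkq (X A') ^ t * mkq (X c) ^ m * mkq (X b) * mkq (X c')) * hdc
              + (mkq (X A) ^ s * mkq (X A') ^ t * mkq (X c) ^ m * mkq (X b) ^ 2) * hc3
              + (mkq (X A) ^ s * mkq (X A') ^ t * mkq (X c) ^ (m+1) * mkq (X c') ^ 2) * hb]
          exact NF_mem _ _ _ _ _ _ (by omega) (by omega) (by omega) (by omega) hst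
    · have hr0 : r = 0 := by omega
      subst hr0
      rw [show NF s t ε 1 m 0 * mkq (X d) = NF s t ε 0 (m+1) 1 by
        simp only [NF]
        linear_combination (mkq (X A) ^ s * mkq (X A') ^ t * mkq (X b) ^ ε *
          mkq (X c) ^ m) * hdd]
      exact NF_mem _ _ _ _ _ _ hε (by omega) (by omega) (by omega) hst

theorem span_eq_top : Submodule.span ℤ (Set.range nfMono) = ⊤ := by
  rw [eq_top_iff]
  rintro x -
  obtain ⟨p, rfl⟩ := Ideal.Quotient.mk_surjective x
  induction p using MvPolynomial.induction_on with
  | C a =>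
    have h1 : (C a : MvPolynomial Var ℤ) = a • 1 := by
      rw [MvPolynomial.smul_eq_C_mul, mul_one]
    have h2 : NF 0 0 0 0 0 0 = mkq 1 := by simp [NF]
    rw [h1, map_zsmul]
    exact Submodule.smul_mem _ _
      (h2 ▸ NF_mem 0 0 0 0 0 0 (by omega) (by omega) (by omega) (by omega) (by omega))
  | add p q hp hq => rw [map_add]; exact Submodule.add_mem _ hp hq
  | mul_X p n hp =>
    rw [map_mul]
    refine Submodule.span_induction (p := fun y _ => y * mkq (X n) ∈ _) ?_ ?_ ?_ ?_ hp
    · rintro y ⟨i, rfl⟩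
      show nfMono i * mkq (X n) ∈ _
      rw [nfMono_eq_NF]
      exact NF_mul_X_mem n i.s i.t i.ε i.δ i.m i.r i.hε i.hδ i.hr i.hδr i.hst
    · show (0 : MvPolynomial Var ℤ ⧸ relIdeal) * mkq (X n) ∈ _
      rw [zero_mul]; exact Submodule.zero_mem _
    · intro u w _ _ hu hw
      show (u + w) * mkq (X n) ∈ _
      rw [add_mul]; exact Submodule.add_mem _ hu hw
    · intro z u _ hu
      show (z • u) * mkq (X n) ∈ _
      rw [smul_mul_assoc]; exact Submodule.smul_mem _ _ hu

theorem nfMono_linearIndependent : LinearIndependent ℤ nfMono := by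
  rw [linearIndependent_iff]
  intro l hl
  rw [Finsupp.linearCombination_apply] at hl
  have key : mkq (l.sum fun i z => monomial (expOf i) z) = l.sum fun i z => z • nfMono i := by
    rw [map_finsuppSum]
    refine Finsupp.sum_congr fun i _ => ?_
    have h1 : (monomial (expOf i) (l i) : MvPolynomial Var ℤ) = (l i) • monomial (expOf i) 1 := by
      simp [MvPolynomial.smul_monomial]
    rw [h1, map_zsmul]
    congr 1
    rw [monomial_expOf]
    rfl
  have hmem : (l.sum fun i z => monomial (expOf i) z) ∈ relIdeal := by
    rw [← Ideal.Quotient.eq_zero_iff_mem]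
    rw [key, hl]
  have h2 := φ_relIdeal hmem
  rw [map_finsuppSum] at h2
  simp only [φ_monomial, nfExp_expOf] at h2
  rwa [Finsupp.sum_single] at h2

end Qside

/-- The normal-form monomials form a `ℤ`-module basis of the quotient ring:
they are linearly independent and span. In particular every element is a
`ℤ`-linear combination of them in a unique way. -/
theorem nfMono_isBasis :
    LinearIndependent ℤ nfMono ∧ Submodule.span ℤ (Set.range nfMono) = ⊤ := by
  exact ⟨nfMono_linearIndependent, span_eq_top⟩
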